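/- Let A, X, Y, Z be jointly distributed finite discrete random variables whose entropies satisfy the Shannon inequalities together with the two conditional independence constraints I(A:X) = 0 and I(X:Y|A,Z) = 0. Then I(X:Y,Z) ≤ H(Z). -/

import Mathlib

open Finset

/-- Probability that the random variable `X` takes value `x`, for weights `μ`. -/
noncomputable def prob {Ω α : Type} [Fintype Ω] [Fintype α] [DecidableEq α]
    (μ : Ω → ℝ) (X : Ω → α) (x : α) : ℝ :=
  ∑ ω, if X ω = x then μ ω else 0

/-- Shannon entropy (base 2) of a finite discrete random variable,
with the convention `0 * log₂ 0 = 0` (since `Real.logb 2 0 = 0`). -/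
noncomputable def ent {Ω α : Type} [Fintype Ω] [Fintype α] [DecidableEq α]
    (μ : Ω → ℝ) (X : Ω → α) : ℝ :=
  -∑ x, prob μ X x * Real.logb 2 (prob μ X x)

/-- `μ` is a probability mass function on the finite sample space `Ω`. -/
def IsPMF {Ω : Type} [Fintype Ω] (μ : Ω → ℝ) : Prop :=
  (∀ ω, 0 ≤ μ ω) ∧ ∑ ω, μ ω = 1

/-- Mutual information `I(X:Y) = H(X) + H(Y) - H(X,Y)`. -/
noncomputable def mutualInfo {Ω α β : Type} [Fintype Ω] [Fintype α] [Fintype β]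
    [DecidableEq α] [DecidableEq β] (μ : Ω → ℝ) (X : Ω → α) (Y : Ω → β) : ℝ :=
  ent μ X + ent μ Y - ent μ (fun ω => (X ω, Y ω))

/-- Conditional mutual information
`I(X:Y|Z) = H(X,Z) + H(Y,Z) - H(Z) - H(X,Y,Z)`. -/
noncomputable def condMutualInfo {Ω α β γ : Type} [Fintype Ω] [Fintype α] [Fintype β]
    [Fintype γ] [DecidableEq α] [DecidableEq β] [DecidableEq γ]
    (μ : Ω → ℝ) (X : Ω → α) (Y : Ω → β) (Z : Ω → γ) : ℝ :=
  ent μ (fun ω => (X ω, Z ω)) + ent μ (fun ω => (Y ω, Z ω)) - ent μ Z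
    - ent μ (fun ω => (X ω, Y ω, Z ω))

/-- Conditional entropy `H(X|Y) = H(X,Y) - H(Y)`. -/
noncomputable def condEnt {Ω α β : Type} [Fintype Ω] [Fintype α] [Fintype β]
    [DecidableEq α] [DecidableEq β] (μ : Ω → ℝ) (X : Ω → α) (Y : Ω → β) : ℝ :=
  ent μ (fun ω => (X ω, Y ω)) - ent μ Y


lemma prob_nonneg {Ω α : Type} [Fintype Ω] [Fintype α] [DecidableEq α]
    {μ : Ω → ℝ} (hμ : ∀ ω, 0 ≤ μ ω) (X : Ω → α) (x : α) : 0 ≤ prob μ X x :=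
  Finset.sum_nonneg fun ω _ => by split <;> simp [hμ ω]

lemma prob_congr {Ω α β : Type} [Fintype Ω] [Fintype α] [Fintype β] [DecidableEq α] [DecidableEq β]
    (μ : Ω → ℝ) (W : Ω → α) (W' : Ω → β) (w : α) (w' : β)
    (h : ∀ ω, W ω = w ↔ W' ω = w') : prob μ W w = prob μ W' w' :=
  Finset.sum_congr rfl fun ω _ => if_congr (h ω) rfl rfl

lemma prob_fst {Ω α β : Type} [Fintype Ω] [Fintype α] [Fintype β] [DecidableEq α] [DecidableEq β]
    (μ : Ω → ℝ) (U : Ω → α) (V : Ω → β) (u : α) :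
    prob μ U u = ∑ v, prob μ (fun ω => (U ω, V ω)) (u, v) := by
  unfold prob
  rw [Finset.sum_comm]
  apply Finset.sum_congr rfl
  intro ω _
  rw [Finset.sum_eq_single (V ω)]
  · simp [Prod.ext_iff]
  · intro v _ hv
    simp only [Prod.mk.injEq, ite_eq_right_iff, and_imp]
    intro _ h; exact absurd h (Ne.symm hv)
  · simp

lemma ent_comp {Ω α β : Type} [Fintype Ω] [Fintype α] [Fintype β] [DecidableEq α] [DecidableEq β]
    (μ : Ω → ℝ) (f : α → β) (hf : Function.Injective f) (W : Ω → α) :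
    ent μ (fun ω => f (W ω)) = ent μ W := by
  have hP : ∀ a : α, prob μ (fun ω => f (W ω)) (f a) = prob μ W a := by
    intro a
    exact Finset.sum_congr rfl fun ω _ => if_congr (by simp [hf.eq_iff]) rfl rfl
  have h0 : ∀ b : β, b ∉ Finset.univ.image f → prob μ (fun ω => f (W ω)) b = 0 := by
    intro b hb
    apply Finset.sum_eq_zero
    intro ω _
    have : f (W ω) ≠ b := fun h => hb (Finset.mem_image.2 ⟨W ω, Finset.mem_univ _, h⟩)
    simp [this]
  unfold ent
  congr 1
  rw [← Finset.sum_subset (Finset.subset_univ (Finset.univ.image f))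
      (fun b _ hb => by rw [h0 b hb]; simp)]
  rw [Finset.sum_image (fun a _ a' _ h => hf h)]
  exact Finset.sum_congr rfl fun a _ => by rw [hP]

lemma ent_const {Ω : Type} [Fintype Ω] (μ : Ω → ℝ) (hμ1 : ∑ ω, μ ω = 1) :
    ent μ (fun _ : Ω => ()) = 0 := by
  have : prob μ (fun _ : Ω => ()) () = 1 := by
    unfold prob; simpa using hμ1
  unfold ent
  simp [this]

lemma gibbs {ι : Type} [Fintype ι] (P Q : ι → ℝ) (hP : ∀ i, 0 ≤ P i) (hQ : ∀ i, 0 ≤ Q i)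
    (h0 : ∀ i, P i ≠ 0 → Q i ≠ 0) (hs : ∑ i, Q i ≤ ∑ i, P i) :
    ∑ i, P i * Real.logb 2 (Q i) ≤ ∑ i, P i * Real.logb 2 (P i) := by
  have hlog2 : 0 < Real.log 2 := Real.log_pos one_lt_two
  have key : ∀ i, P i * Real.logb 2 (Q i) - P i * Real.logb 2 (P i) ≤ (Q i - P i) / Real.log 2 := by
    intro i
    by_cases h : P i = 0
    · simp only [h, zero_mul, sub_zero, sub_self]
      exact div_nonneg (hQ i) hlog2.le
    · have hP' : 0 < P i := (hP i).lt_of_ne (Ne.symm h)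
      have hQ' : 0 < Q i := (hQ i).lt_of_ne (Ne.symm (h0 i h))
      have hlog : Real.log (Q i / P i) ≤ Q i / P i - 1 :=
        Real.log_le_sub_one_of_pos (by positivity)
      have hrw : Real.logb 2 (Q i) - Real.logb 2 (P i) = Real.log (Q i / P i) / Real.log 2 := by
        rw [Real.log_div (ne_of_gt hQ') (ne_of_gt hP')]
        unfold Real.logb; ring
      rw [← mul_sub, hrw]
      have h1 : P i * (Real.log (Q i / P i) / Real.log 2)
          ≤ P i * ((Q i / P i - 1) / Real.log 2) := by gcongr
      have h2 : P i * ((Q i / P i - 1) / Real.log 2) = (Q i - P i) / Real.log 2 := by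
        field_simp
      linarith
  have hsum : ∑ i, (P i * Real.logb 2 (Q i) - P i * Real.logb 2 (P i))
      ≤ ∑ i, (Q i - P i) / Real.log 2 := Finset.sum_le_sum fun i _ => key i
  rw [Finset.sum_sub_distrib] at hsum
  have h2 : ∑ i, (Q i - P i) / Real.log 2 = (∑ i, Q i - ∑ i, P i) / Real.log 2 := by
    rw [← Finset.sum_div, Finset.sum_sub_distrib]
  have h3 : (∑ i, Q i - ∑ i, P i) / Real.log 2 ≤ 0 :=
    div_nonpos_of_nonpos_of_nonneg (by linarith) hlog2.le
  linarith

lemma sum_triple {α β γ : Type} [Fintype α] [Fintype β] [Fintype γ] (f : α × β × γ → ℝ) :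
    ∑ t, f t = ∑ x, ∑ y, ∑ z, f (x, y, z) := by
  rw [Fintype.sum_prod_type]
  exact Finset.sum_congr rfl fun x _ => Fintype.sum_prod_type _

lemma condMI_nonneg {Ω α β γ : Type} [Fintype Ω] [Fintype α] [Fintype β] [Fintype γ]
    [DecidableEq α] [DecidableEq β] [DecidableEq γ]
    (μ : Ω → ℝ) (hμ : ∀ ω, 0 ≤ μ ω) (X : Ω → α) (Y : Ω → β) (Z : Ω → γ) :
    0 ≤ condMutualInfo μ X Y Z := by
  set p : α × β × γ → ℝ := prob μ (fun ω => (X ω, Y ω, Z ω)) with hpdef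
  set sXZ : α → γ → ℝ := fun x zz => ∑ yy, p (x, yy, zz) with hsXZ
  set sYZ : β → γ → ℝ := fun yy zz => ∑ x, p (x, yy, zz) with hsYZ
  set sZ : γ → ℝ := fun zz => ∑ x, sXZ x zz with hsZ
  have hp : ∀ t, 0 ≤ p t := fun t => prob_nonneg hμ _ t
  have hsXZ0 : ∀ x zz, 0 ≤ sXZ x zz := fun x zz => Finset.sum_nonneg fun _ _ => hp _
  have hsYZ0 : ∀ yy zz, 0 ≤ sYZ yy zz := fun yy zz => Finset.sum_nonneg fun _ _ => hp _
  have hsZ0 : ∀ zz, 0 ≤ sZ zz := fun zz => Finset.sum_nonneg fun _ _ => hsXZ0 _ _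
  have hle1 : ∀ x yy zz, p (x, yy, zz) ≤ sXZ x zz := fun x yy zz =>
    Finset.single_le_sum (f := fun yy' => p (x, yy', zz)) (fun _ _ => hp _) (Finset.mem_univ yy)
  have hle2 : ∀ x yy zz, p (x, yy, zz) ≤ sYZ yy zz := fun x yy zz =>
    Finset.single_le_sum (f := fun x' => p (x', yy, zz)) (fun _ _ => hp _) (Finset.mem_univ x)
  have hle3 : ∀ x yy zz, p (x, yy, zz) ≤ sZ zz := fun x yy zz =>
    le_trans (hle1 x yy zz)
      (Finset.single_le_sum (f := fun x' => sXZ x' zz) (fun _ _ => hsXZ0 _ _) (Finset.mem_univ x))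
  -- marginals
  have mXZ : ∀ x zz, prob μ (fun ω => (X ω, Z ω)) (x, zz) = sXZ x zz := by
    intro x zz
    rw [prob_fst μ (fun ω => (X ω, Z ω)) Y (x, zz)]
    exact Finset.sum_congr rfl fun yy _ =>
      prob_congr μ _ _ _ _ (fun ω => by simp only [Prod.mk.injEq]; tauto)
  have mYZ : ∀ yy zz, prob μ (fun ω => (Y ω, Z ω)) (yy, zz) = sYZ yy zz := by
    intro yy zz
    rw [prob_fst μ (fun ω => (Y ω, Z ω)) X (yy, zz)]
    exact Finset.sum_congr rfl fun x _ =>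
      prob_congr μ _ _ _ _ (fun ω => by simp only [Prod.mk.injEq]; tauto)
  have mZ : ∀ zz, prob μ Z zz = sZ zz := by
    intro zz
    rw [prob_fst μ Z (fun ω => (X ω, Y ω)) zz, Fintype.sum_prod_type]
    exact Finset.sum_congr rfl fun x _ => Finset.sum_congr rfl fun yy _ =>
      prob_congr μ _ _ _ _ (fun ω => by simp only [Prod.mk.injEq]; tauto)
  -- entropy expansions as triple sums
  have E1 : ent μ (fun ω => (X ω, Z ω))
      = -∑ x, ∑ yy, ∑ zz, p (x, yy, zz) * Real.logb 2 (sXZ x zz) := by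
    unfold ent
    congr 1
    rw [Fintype.sum_prod_type]
    refine Finset.sum_congr rfl fun x _ => ?_
    rw [Finset.sum_comm]
    refine Finset.sum_congr rfl fun zz _ => ?_
    rw [mXZ x zz]
    exact Finset.sum_mul _ _ _
  have E2 : ent μ (fun ω => (Y ω, Z ω))
      = -∑ x, ∑ yy, ∑ zz, p (x, yy, zz) * Real.logb 2 (sYZ yy zz) := by
    unfold ent
    congr 1
    rw [Fintype.sum_prod_type]
    calc ∑ yy, ∑ zz, prob μ (fun ω => (Y ω, Z ω)) (yy, zz)
            * Real.logb 2 (prob μ (fun ω => (Y ω, Z ω)) (yy, zz))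
        = ∑ yy, ∑ zz, ∑ x, p (x, yy, zz) * Real.logb 2 (sYZ yy zz) := by
          refine Finset.sum_congr rfl fun yy _ => Finset.sum_congr rfl fun zz _ => ?_
          rw [mYZ yy zz]
          exact Finset.sum_mul _ _ _
      _ = ∑ yy, ∑ x, ∑ zz, p (x, yy, zz) * Real.logb 2 (sYZ yy zz) :=
          Finset.sum_congr rfl fun yy _ => Finset.sum_comm
      _ = ∑ x, ∑ yy, ∑ zz, p (x, yy, zz) * Real.logb 2 (sYZ yy zz) := Finset.sum_comm
  have E3 : ent μ Z
      = -∑ x, ∑ yy, ∑ zz, p (x, yy, zz) * Real.logb 2 (sZ zz) := by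
    unfold ent
    congr 1
    calc ∑ zz, prob μ Z zz * Real.logb 2 (prob μ Z zz)
        = ∑ zz, ∑ x, ∑ yy, p (x, yy, zz) * Real.logb 2 (sZ zz) := by
          refine Finset.sum_congr rfl fun zz _ => ?_
          rw [mZ zz]
          rw [show sZ zz * Real.logb 2 (sZ zz) = ∑ x, sXZ x zz * Real.logb 2 (sZ zz) from
            Finset.sum_mul _ _ _]
          exact Finset.sum_congr rfl fun x _ => Finset.sum_mul _ _ _
      _ = ∑ x, ∑ zz, ∑ yy, p (x, yy, zz) * Real.logb 2 (sZ zz) := Finset.sum_comm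
      _ = ∑ x, ∑ yy, ∑ zz, p (x, yy, zz) * Real.logb 2 (sZ zz) :=
          Finset.sum_congr rfl fun x _ => Finset.sum_comm
  have E4 : ent μ (fun ω => (X ω, Y ω, Z ω))
      = -∑ x, ∑ yy, ∑ zz, p (x, yy, zz) * Real.logb 2 (p (x, yy, zz)) := by
    unfold ent
    congr 1
    exact sum_triple _
  -- the auxiliary distribution
  set Q : α × β × γ → ℝ := fun t =>
    if sZ t.2.2 = 0 then 0 else sXZ t.1 t.2.2 * sYZ t.2.1 t.2.2 / sZ t.2.2 with hQdef
  have hQ0 : ∀ t, 0 ≤ Q t := by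
    intro t
    simp only [hQdef]
    split
    · exact le_rfl
    · exact div_nonneg (mul_nonneg (hsXZ0 _ _) (hsYZ0 _ _)) (hsZ0 _)
  have hne : ∀ t, p t ≠ 0 → Q t ≠ 0 := by
    rintro ⟨x, yy, zz⟩ h
    have hpt : 0 < p (x, yy, zz) := (hp _).lt_of_ne (Ne.symm h)
    have h1 : 0 < sXZ x zz := lt_of_lt_of_le hpt (hle1 x yy zz)
    have h2 : 0 < sYZ yy zz := lt_of_lt_of_le hpt (hle2 x yy zz)
    have h3 : 0 < sZ zz := lt_of_lt_of_le hpt (hle3 x yy zz)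
    simp only [hQdef]
    rw [if_neg (ne_of_gt h3)]
    positivity
  have hsum : ∑ t, Q t = ∑ t, p t := by
    rw [sum_triple, sum_triple]
    calc ∑ x, ∑ yy, ∑ zz, Q (x, yy, zz)
        = ∑ x, ∑ zz, ∑ yy, Q (x, yy, zz) :=
          Finset.sum_congr rfl fun x _ => Finset.sum_comm
      _ = ∑ zz, ∑ x, ∑ yy, Q (x, yy, zz) := Finset.sum_comm
      _ = ∑ zz, sZ zz := by
          refine Finset.sum_congr rfl fun zz _ => ?_
          by_cases h : sZ zz = 0
          · simp [hQdef, h]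
          · have hy : ∑ yy, sYZ yy zz = sZ zz := by
              simp only [hsYZ, hsXZ, hsZ]
              exact Finset.sum_comm
            calc ∑ x, ∑ yy, Q (x, yy, zz)
                = ∑ x, sXZ x zz := by
                  refine Finset.sum_congr rfl fun x _ => ?_
                  simp only [hQdef, if_neg h]
                  rw [← Finset.sum_div, ← Finset.mul_sum, hy, mul_div_assoc, div_self h,
                    mul_one]
              _ = sZ zz := rfl
      _ = ∑ x, ∑ yy, ∑ zz, p (x, yy, zz) := by
          rw [Finset.sum_comm]
          exact Finset.sum_congr rfl fun x _ => Finset.sum_comm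
  have G := gibbs p Q hp hQ0 hne (le_of_eq hsum)
  rw [sum_triple (fun t => p t * Real.logb 2 (Q t)),
    sum_triple (fun t => p t * Real.logb 2 (p t))] at G
  have hlogQ : ∀ x yy zz, p (x, yy, zz) * Real.logb 2 (Q (x, yy, zz))
      = p (x, yy, zz) * Real.logb 2 (sXZ x zz) + p (x, yy, zz) * Real.logb 2 (sYZ yy zz)
        - p (x, yy, zz) * Real.logb 2 (sZ zz) := by
    intro x yy zz
    by_cases h : p (x, yy, zz) = 0
    · simp [h]
    · have hpt : 0 < p (x, yy, zz) := (hp _).lt_of_ne (Ne.symm h)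
      have h1 : 0 < sXZ x zz := lt_of_lt_of_le hpt (hle1 x yy zz)
      have h2 : 0 < sYZ yy zz := lt_of_lt_of_le hpt (hle2 x yy zz)
      have h3 : 0 < sZ zz := lt_of_lt_of_le hpt (hle3 x yy zz)
      have hQval : Q (x, yy, zz) = sXZ x zz * sYZ yy zz / sZ zz := by
        simp only [hQdef]
        rw [if_neg (ne_of_gt h3)]
      rw [hQval, Real.logb_div (mul_ne_zero (ne_of_gt h1) (ne_of_gt h2)) (ne_of_gt h3),
        Real.logb_mul (ne_of_gt h1) (ne_of_gt h2)]
      ring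
  have hsplit : ∑ x, ∑ yy, ∑ zz, p (x, yy, zz) * Real.logb 2 (Q (x, yy, zz))
      = (∑ x, ∑ yy, ∑ zz, p (x, yy, zz) * Real.logb 2 (sXZ x zz))
        + (∑ x, ∑ yy, ∑ zz, p (x, yy, zz) * Real.logb 2 (sYZ yy zz))
        - (∑ x, ∑ yy, ∑ zz, p (x, yy, zz) * Real.logb 2 (sZ zz)) := by
    rw [show (∑ x, ∑ yy, ∑ zz, p (x, yy, zz) * Real.logb 2 (Q (x, yy, zz)))
        = ∑ x, ∑ yy, ∑ zz, (p (x, yy, zz) * Real.logb 2 (sXZ x zz)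
          + p (x, yy, zz) * Real.logb 2 (sYZ yy zz)
          - p (x, yy, zz) * Real.logb 2 (sZ zz)) from
      Finset.sum_congr rfl fun x _ => Finset.sum_congr rfl fun yy _ =>
        Finset.sum_congr rfl fun zz _ => hlogQ x yy zz]
    simp only [Finset.sum_add_distrib, Finset.sum_sub_distrib]
  rw [hsplit] at G
  unfold condMutualInfo
  rw [E1, E2, E3, E4]
  linarith

lemma mutualInfo_nonneg {Ω α β : Type} [Fintype Ω] [Fintype α] [Fintype β]
    [DecidableEq α] [DecidableEq β] (μ : Ω → ℝ) (hμ0 : ∀ ω, 0 ≤ μ ω)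
    (hμ1 : ∑ ω, μ ω = 1) (U : Ω → α) (V : Ω → β) : 0 ≤ mutualInfo μ U V := by
  have h : 0 ≤ ent μ (fun ω => (U ω, ())) + ent μ (fun ω => (V ω, ()))
      - ent μ (fun _ : Ω => ()) - ent μ (fun ω => (U ω, V ω, ())) :=
    condMI_nonneg μ hμ0 U V (fun _ => ())
  have e0 : ent μ (fun _ : Ω => ()) = 0 := ent_const μ hμ1
  have e1 : ent μ (fun ω => (U ω, ())) = ent μ U :=
    ent_comp μ (fun u => (u, ())) (fun p q h => by simpa using h) U
  have e2 : ent μ (fun ω => (V ω, ())) = ent μ V :=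
    ent_comp μ (fun v => (v, ())) (fun p q h => by simpa using h) V
  have e3 : ent μ (fun ω => (U ω, V ω, ())) = ent μ (fun ω => (U ω, V ω)) :=
    ent_comp μ (fun t : α × β => (t.1, t.2, ()))
      (fun p q h => by
        rcases p with ⟨p1, p2⟩; rcases q with ⟨q1, q2⟩; simpa using h)
      (fun ω => (U ω, V ω))
  unfold mutualInfo
  linarith

lemma ent_le_pair {Ω α β : Type} [Fintype Ω] [Fintype α] [Fintype β]
    [DecidableEq α] [DecidableEq β] (μ : Ω → ℝ) (hμ0 : ∀ ω, 0 ≤ μ ω)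
    (V : Ω → α) (W : Ω → β) : ent μ W ≤ ent μ (fun ω => (V ω, W ω)) := by
  have h : 0 ≤ ent μ (fun ω => (V ω, W ω)) + ent μ (fun ω => (V ω, W ω))
      - ent μ W - ent μ (fun ω => (V ω, V ω, W ω)) := condMI_nonneg μ hμ0 V V W
  have e : ent μ (fun ω => (V ω, V ω, W ω)) = ent μ (fun ω => (V ω, W ω)) :=
    ent_comp μ (fun t : α × β => (t.1, t.1, t.2))
      (fun p q h => by
        rcases p with ⟨p1, p2⟩; rcases q with ⟨q1, q2⟩; simpa using (by
          simpa [Prod.ext_iff] using h : p1 = q1 ∧ p1 = q1 ∧ p2 = q2).imp id And.right)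
      (fun ω => (V ω, W ω))
  linarith


/-- Entropic constraint of the instrumental scenario: if I(A:X) = 0 and
I(X:Y|A,Z) = 0 then I(X:Y,Z) ≤ H(Z).  (The Shannon inequalities hold
automatically since A, X, Y, Z are actual jointly distributed random
variables.) -/
theorem instrumental_entropic_constraint
    {Ω a x y z : Type} [Fintype Ω] [Fintype a] [Fintype x] [Fintype y] [Fintype z]
    [DecidableEq a] [DecidableEq x] [DecidableEq y] [DecidableEq z]
    (μ : Ω → ℝ) (hμ : IsPMF μ)
    (A : Ω → a) (X : Ω → x) (Y : Ω → y) (Z : Ω → z)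
    (h1 : mutualInfo μ A X = 0)
    (h2 : condMutualInfo μ X Y (fun ω => (A ω, Z ω)) = 0) :
    mutualInfo μ X (fun ω => (Y ω, Z ω)) ≤ ent μ Z := by
  obtain ⟨hμ0, hμ1⟩ := hμ
  have S1 : 0 ≤ ent μ (fun ω => (A ω, Y ω, Z ω)) + ent μ (fun ω => (X ω, Y ω, Z ω))
      - ent μ (fun ω => (Y ω, Z ω)) - ent μ (fun ω => (A ω, X ω, Y ω, Z ω)) :=
    condMI_nonneg μ hμ0 A X (fun ω => (Y ω, Z ω))
  have S2 : 0 ≤ ent μ A + ent μ Z - ent μ (fun ω => (A ω, Z ω)) :=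
    mutualInfo_nonneg μ hμ0 hμ1 A Z
  have S3 : ent μ (fun ω => (A ω, X ω)) ≤ ent μ (fun ω => (Z ω, A ω, X ω)) :=
    ent_le_pair μ hμ0 Z (fun ω => (A ω, X ω))
  have h1' : ent μ A + ent μ X - ent μ (fun ω => (A ω, X ω)) = 0 := h1
  have h2' : ent μ (fun ω => (X ω, A ω, Z ω)) + ent μ (fun ω => (Y ω, A ω, Z ω))
      - ent μ (fun ω => (A ω, Z ω)) - ent μ (fun ω => (X ω, Y ω, A ω, Z ω)) = 0 := h2
  have R1 : ent μ (fun ω => (X ω, A ω, Z ω)) = ent μ (fun ω => (Z ω, A ω, X ω)) :=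
    ent_comp μ (fun t : z × a × x => (t.2.2, t.2.1, t.1))
      (fun p q h => by
        rcases p with ⟨p1, p2, p3⟩; rcases q with ⟨q1, q2, q3⟩
        simp only [Prod.mk.injEq] at h ⊢; tauto)
      (fun ω => (Z ω, A ω, X ω))
  have R2 : ent μ (fun ω => (Y ω, A ω, Z ω)) = ent μ (fun ω => (A ω, Y ω, Z ω)) :=
    ent_comp μ (fun t : a × y × z => (t.2.1, t.1, t.2.2))
      (fun p q h => by
        rcases p with ⟨p1, p2, p3⟩; rcases q with ⟨q1, q2, q3⟩
        simp only [Prod.mk.injEq] at h ⊢; tauto)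
      (fun ω => (A ω, Y ω, Z ω))
  have R3 : ent μ (fun ω => (X ω, Y ω, A ω, Z ω)) = ent μ (fun ω => (A ω, X ω, Y ω, Z ω)) :=
    ent_comp μ (fun t : a × x × y × z => (t.2.1, t.2.2.1, t.1, t.2.2.2))
      (fun p q h => by
        rcases p with ⟨p1, p2, p3, p4⟩; rcases q with ⟨q1, q2, q3, q4⟩
        simp only [Prod.mk.injEq] at h ⊢; tauto)
      (fun ω => (A ω, X ω, Y ω, Z ω))
  show ent μ X + ent μ (fun ω => (Y ω, Z ω)) - ent μ (fun ω => (X ω, Y ω, Z ω)) ≤ ent μ Z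
  linarith
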